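/- arXiv:1207.7188 — 3 statements merged into one kernel-verified Lean document; each statement's English description precedes it below -/
import Mathlib

section
/- Let Ω ⊆ ℝ^d be open, let the Lagrangian L : ℝ^d × ℝ × ℝ^d → ℝ be twice continuously differentiable, let u ∈ C²(Ω), ξ ∈ C¹(Ω; ℝ^d), φ ∈ C¹(Ω), and set Q := φ − ξ·∇u. If the infinitesimal invariance identity ∇Q · L_p(·,u,∇u) + Q · L_u(·,u,∇u) + div(L(·,u,∇u) ξ) = 0 holds at every point of Ω, then at every point of Ω one has Q · 𝓛[u] + div( Q L_p(·,u,∇u) + L(·,u,∇u) ξ ) = 0; that is, the divergence of the Noether current C[u] := L(·,u,∇u) ξ + (φ − ξ·∇u) L_p(·,u,∇u) equals −Q 𝓛[u] pointwise on Ω. -/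
open MeasureTheory RealInnerProductSpace
open scoped BigOperators

noncomputable section

/-- `ℝ^d` as a Euclidean (inner product) space. -/
abbrev Euc (d : ℕ) := EuclideanSpace ℝ (Fin d)

/-- Divergence of a vector field on `ℝ^d`. -/
noncomputable def pdiv {d : ℕ} (F : Euc d → Euc d) (x : Euc d) : ℝ :=
  ∑ i, fderiv ℝ F x (EuclideanSpace.single i 1) i

/-- `x ↦ L(x, u(x), ∇u(x))`, the Lagrangian evaluated along `u`. -/
noncomputable def lagAlong {d : ℕ} (L : Euc d → ℝ → Euc d → ℝ) (u : Euc d → ℝ)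
    (x : Euc d) : ℝ :=
  L x (u x) (gradient u x)

/-- `L_u(x, u(x), ∇u(x))`, the partial derivative of `L` in its second argument
evaluated along `u`. -/
noncomputable def lagU {d : ℕ} (L : Euc d → ℝ → Euc d → ℝ) (u : Euc d → ℝ)
    (x : Euc d) : ℝ :=
  deriv (fun s => L x s (gradient u x)) (u x)

/-- `L_p(x, u(x), ∇u(x))`, the gradient of `L` in its third argument
evaluated along `u`. -/
noncomputable def lagP {d : ℕ} (L : Euc d → ℝ → Euc d → ℝ) (u : Euc d → ℝ)
    (x : Euc d) : Euc d :=
  gradient (fun p => L x (u x) p) (gradient u x)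

/- ### Auxiliary lemmas -/

lemma inner_grad_aux {d : ℕ} (f : Euc d → ℝ) (x y : Euc d) :
    ⟪gradient f x, y⟫ = fderiv ℝ f x y := by
  simp [gradient, InnerProductSpace.toDual_symm_apply]

lemma pdiv_add_aux {d : ℕ} {F G : Euc d → Euc d} {x : Euc d}
    (hF : DifferentiableAt ℝ F x) (hG : DifferentiableAt ℝ G x) :
    pdiv (fun y => F y + G y) x = pdiv F x + pdiv G x := by
  unfold pdiv
  rw [fderiv_fun_add hF hG, ← Finset.sum_add_distrib]
  simp

lemma pdiv_smul_aux {d : ℕ} {f : Euc d → ℝ} {V : Euc d → Euc d} {x : Euc d}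
    (hf : DifferentiableAt ℝ f x) (hV : DifferentiableAt ℝ V x) :
    pdiv (fun y => f y • V y) x = ⟪gradient f x, V x⟫ + f x * pdiv V x := by
  have h := (hf.hasFDerivAt.smul hV.hasFDerivAt).fderiv
  unfold pdiv
  rw [show (fun y => f y • V y) = f • V from rfl, h]
  have hinner : ⟪gradient f x, V x⟫
      = ∑ i, fderiv ℝ f x (EuclideanSpace.single i 1) * V x i := by
    rw [PiLp.inner_apply]
    congr 1; ext i
    rw [show fderiv ℝ f x (EuclideanSpace.single i 1)
        = ⟪gradient f x, EuclideanSpace.single i 1⟫ from (inner_grad_aux f x _).symm]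
    simp [PiLp.inner_apply, EuclideanSpace.single_apply]
    rw [← inner_grad_aux, EuclideanSpace.inner_single_right]
    simp only [one_mul, starRingEnd_apply, star_trivial]
    ring
  rw [hinner, Finset.mul_sum, ← Finset.sum_add_distrib]
  congr 1; ext i
  simp [mul_comm]
  ring

lemma lagP_eq_aux {d : ℕ} (L : Euc d → ℝ → Euc d → ℝ)
    (hL : ContDiff ℝ 2 (fun q : Euc d × ℝ × Euc d => L q.1 q.2.1 q.2.2))
    (y : Euc d) (s : ℝ) (q : Euc d) :
    gradient (fun p => L y s p) q
      = (InnerProductSpace.toDual ℝ (Euc d)).symm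
        ((fderiv ℝ (fun q : Euc d × ℝ × Euc d => L q.1 q.2.1 q.2.2) (y, s, q)).comp
          ((ContinuousLinearMap.inr ℝ (Euc d) (ℝ × Euc d)).comp
            (ContinuousLinearMap.inr ℝ ℝ (Euc d)))) := by
  have hmap : HasFDerivAt (fun p : Euc d => ((y, s, p) : Euc d × ℝ × Euc d))
      ((ContinuousLinearMap.inr ℝ (Euc d) (ℝ × Euc d)).comp
        (ContinuousLinearMap.inr ℝ ℝ (Euc d))) q := by
    have h1 : HasFDerivAt (fun _ : Euc d => y) (0 : Euc d →L[ℝ] Euc d) q :=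
      hasFDerivAt_const y q
    have h2 : HasFDerivAt (fun _ : Euc d => s) (0 : Euc d →L[ℝ] ℝ) q :=
      hasFDerivAt_const s q
    have := h1.prodMk (h2.prodMk (hasFDerivAt_id q))
    exact this.congr_fderiv (by ext v <;> simp)
  have hFd : HasFDerivAt (fun q : Euc d × ℝ × Euc d => L q.1 q.2.1 q.2.2)
      (fderiv ℝ (fun q : Euc d × ℝ × Euc d => L q.1 q.2.1 q.2.2) (y, s, q)) (y, s, q) :=
    (hL.differentiable (by norm_num) (y, s, q)).hasFDerivAt
  have h := (hFd.comp q hmap).fderiv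
  rw [gradient, show (fun p => L y s p)
      = ((fun q : Euc d × ℝ × Euc d => L q.1 q.2.1 q.2.2) ∘ fun p : Euc d => (y, s, p))
      from rfl, h]

/-- Noether's identity `div C[u] = Q·𝓛[u]`, pointwise form:
if the infinitesimal invariance identity holds on the open set `Ω`, then
`Q·𝓛[u] + div(Q L_p + L ξ) = 0` pointwise on `Ω`. -/
theorem noether_divergence_identity {d : ℕ} (Ω : Set (Euc d)) (hΩ : IsOpen Ω)
    (L : Euc d → ℝ → Euc d → ℝ)
    (hL : ContDiff ℝ 2 (fun q : Euc d × ℝ × Euc d => L q.1 q.2.1 q.2.2))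
    (u : Euc d → ℝ) (hu : ContDiffOn ℝ 2 u Ω)
    (ξ : Euc d → Euc d) (hξ : ContDiffOn ℝ 1 ξ Ω)
    (φ : Euc d → ℝ) (hφ : ContDiffOn ℝ 1 φ Ω)
    (Q : Euc d → ℝ) (hQ : ∀ x, Q x = φ x - ⟪ξ x, gradient u x⟫)
    (hinv : ∀ x ∈ Ω,
      ⟪gradient Q x, lagP L u x⟫ + Q x * lagU L u x
        + pdiv (fun y => lagAlong L u y • ξ y) x = 0) :
    ∀ x ∈ Ω,
      Q x * (-(pdiv (lagP L u) x) + lagU L u x)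
        + pdiv (fun y => Q y • lagP L u y + lagAlong L u y • ξ y) x = 0 := by
  intro x hx
  have hxn : Ω ∈ nhds x := hΩ.mem_nhds hx
  set F : Euc d × ℝ × Euc d → ℝ := fun q => L q.1 q.2.1 q.2.2 with hF
  -- basic differentiability at x
  have hu2 : ContDiffAt ℝ 2 u x := hu.contDiffAt hxn
  have hgrad : ContDiffAt ℝ 1 (gradient u) x := by
    have h1 : ContDiffAt ℝ 1 (fderiv ℝ u) x := hu2.fderiv_right (by norm_num)
    exact ((InnerProductSpace.toDual ℝ (Euc d)).symm.contDiff.contDiffAt).comp x h1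
  have hmap : ContDiffAt ℝ 1 (fun y => ((y, u y, gradient u y) : Euc d × ℝ × Euc d)) x :=
    contDiffAt_id.prodMk ((hu2.of_le one_le_two).prodMk hgrad)
  have hF1 : ContDiff ℝ 1 (fderiv ℝ F) := hL.fderiv_right (by norm_num)
  -- lagP is differentiable at x
  have hlagP_eq : (lagP L u) = fun y =>
      (InnerProductSpace.toDual ℝ (Euc d)).symm
        ((fderiv ℝ F (y, u y, gradient u y)).comp
          ((ContinuousLinearMap.inr ℝ (Euc d) (ℝ × Euc d)).comp
            (ContinuousLinearMap.inr ℝ ℝ (Euc d)))) := by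
    funext y
    exact lagP_eq_aux L hL y (u y) (gradient u y)
  have hlagPdiff : DifferentiableAt ℝ (lagP L u) x := by
    rw [hlagP_eq]
    have h1 : ContDiffAt ℝ 1 (fun y => fderiv ℝ F (y, u y, gradient u y)) x :=
      hF1.contDiffAt.comp x hmap
    have h2 : ContDiffAt ℝ 1 (fun y => (fderiv ℝ F (y, u y, gradient u y)).comp
        ((ContinuousLinearMap.inr ℝ (Euc d) (ℝ × Euc d)).comp
          (ContinuousLinearMap.inr ℝ ℝ (Euc d)))) x :=
      h1.clm_comp contDiffAt_const
    exact (((InnerProductSpace.toDual ℝ (Euc d)).symm.contDiff.contDiffAt).comp x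
      h2).differentiableAt one_ne_zero
  -- lagAlong is differentiable at x
  have hlagAdiff : DifferentiableAt ℝ (lagAlong L u) x := by
    have : ContDiffAt ℝ 1 (fun y => F (y, u y, gradient u y)) x :=
      ((hL.of_le one_le_two).contDiffAt).comp x hmap
    exact this.differentiableAt one_ne_zero
  -- ξ, Q differentiable at x
  have hξd : DifferentiableAt ℝ ξ x :=
    ((hξ.contDiffAt hxn).differentiableAt one_ne_zero)
  have hQd : DifferentiableAt ℝ Q x := by
    have : Q = fun y => φ y - ⟪ξ y, gradient u y⟫ := funext hQ
    rw [this]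
    exact ((hφ.contDiffAt hxn).differentiableAt one_ne_zero).sub
      (hξd.inner ℝ (hgrad.differentiableAt one_ne_zero))
  -- split the divergence
  have hsplit : pdiv (fun y => Q y • lagP L u y + lagAlong L u y • ξ y) x
      = ⟪gradient Q x, lagP L u x⟫ + Q x * pdiv (lagP L u) x
        + pdiv (fun y => lagAlong L u y • ξ y) x := by
    rw [pdiv_add_aux (hQd.fun_smul hlagPdiff) (hlagAdiff.fun_smul hξd),
      pdiv_smul_aux hQd hlagPdiff]
  rw [hsplit]
  have key := hinv x hx
  ring_nf
  ring_nf at key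
  linarith
end
end

section
/- Let Ω ⊆ ℝ² be open, let g : ℝ → ℝ be continuously differentiable, set f(x) := g(x₁² + x₂²), and let u ∈ C²(Ω). Define the vector field C[u] : Ω → ℝ² by C[u]₁ := x₂((∂₁u)² − (∂₂u)²)/2 − x₁ ∂₁u ∂₂u + x₂ f u and C[u]₂ := x₁((∂₁u)² − (∂₂u)²)/2 + x₂ ∂₁u ∂₂u − x₁ f u. Then at every point of Ω, div(C[u]) = (x₂ ∂₁u − x₁ ∂₂u)(Δu + f). In particular, if u solves −Δu = f on Ω, then div(C[u]) = 0 at every point of Ω. -/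
open MeasureTheory RealInnerProductSpace
open scoped BigOperators

noncomputable section

set_option maxHeartbeats 1000000

lemma Euc.dual_coord {d : ℕ} (ℓ : StrongDual ℝ (Euc d)) (i : Fin d) :
    (InnerProductSpace.toDual ℝ (Euc d)).symm ℓ i = ℓ (EuclideanSpace.single i 1) := by
  have h : ⟪(InnerProductSpace.toDual ℝ (Euc d)).symm ℓ, EuclideanSpace.single i 1⟫
      = ℓ (EuclideanSpace.single i 1) := InnerProductSpace.toDual_symm_apply
  rw [← h, EuclideanSpace.inner_single_right]
  simp

lemma grad_apply {d : ℕ} (u : Euc d → ℝ) (x : Euc d) (i : Fin d) :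
    gradient u x i = fderiv ℝ u x (EuclideanSpace.single i 1) :=
  Euc.dual_coord _ i

lemma single_eq_smul {d : ℕ} (i : Fin d) (t : ℝ) :
    EuclideanSpace.single i t = t • EuclideanSpace.single i 1 := by
  ext j
  simp [EuclideanSpace.single_apply, mul_ite]

/-- Noether conservation law for Laplace's problem in `d = 2`:
for radially symmetric data `f(x) = g(x₁² + x₂²)` the rotational Noether current
`C[u]` satisfies `div C[u] = (x₂ ∂₁u − x₁ ∂₂u)(Δu + f)` on `Ω`; in particular it is
divergence-free over solutions of `−Δu = f`. -/
theorem noether_law_laplace_rotations (Ω : Set (Euc 2)) (hΩ : IsOpen Ω)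
    (g : ℝ → ℝ) (hg : ContDiff ℝ 1 g)
    (f : Euc 2 → ℝ) (hf : ∀ x, f x = g ((x 0) ^ 2 + (x 1) ^ 2))
    (u : Euc 2 → ℝ) (hu : ContDiffOn ℝ 2 u Ω)
    (C : Euc 2 → Euc 2)
    (hC : ∀ x, C x =
      EuclideanSpace.single 0
        (x 1 * ((gradient u x 0) ^ 2 - (gradient u x 1) ^ 2) / 2
          - x 0 * gradient u x 0 * gradient u x 1 + x 1 * f x * u x)
      + EuclideanSpace.single 1
        (x 0 * ((gradient u x 0) ^ 2 - (gradient u x 1) ^ 2) / 2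
          + x 1 * gradient u x 0 * gradient u x 1 - x 0 * f x * u x)) :
    (∀ x ∈ Ω, pdiv C x
        = (x 1 * gradient u x 0 - x 0 * gradient u x 1)
            * (pdiv (fun y => gradient u y) x + f x))
    ∧ ((∀ x ∈ Ω, -(pdiv (fun y => gradient u y) x) = f x) →
        ∀ x ∈ Ω, pdiv C x = 0) := by
  have hmain : ∀ x ∈ Ω, pdiv C x
      = (x 1 * gradient u x 0 - x 0 * gradient u x 1)
          * (pdiv (fun y => gradient u y) x + f x) := by
    intro x hx
    have hux : ContDiffAt ℝ 2 u x := hu.contDiffAt (hΩ.mem_nhds hx)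
    have hu1 : ContDiffAt ℝ 1 (fderiv ℝ u) x := hux.fderiv_right (by norm_num)
    set D2 := fderiv ℝ (fderiv ℝ u) x with hD2def
    have hD2 : HasFDerivAt (fderiv ℝ u) D2 x := (hu1.differentiableAt (by norm_num)).hasFDerivAt
    have hsymm : ∀ v w, D2 v w = D2 w v := hux.isSymmSndFDerivAt (by norm_num)
    have hud : HasFDerivAt u (fderiv ℝ u x) x :=
      (hux.differentiableAt (by norm_num)).hasFDerivAt
    have hp : ∀ i : Fin 2, HasFDerivAt (fun y => gradient u y i)
        ((ContinuousLinearMap.apply ℝ ℝ (EuclideanSpace.single i 1)).comp D2) x := by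
      intro i
      have h := ((ContinuousLinearMap.apply ℝ ℝ
          (EuclideanSpace.single i 1)).hasFDerivAt (x := fderiv ℝ u x)).comp x hD2
      have e : (fun y => gradient u y i)
          = fun y => (ContinuousLinearMap.apply ℝ ℝ (EuclideanSpace.single i 1))
              (fderiv ℝ u y) :=
        funext fun y => grad_apply u y i
      rw [e]; exact h
    have hcoord : ∀ i : Fin 2, HasFDerivAt (fun y : Euc 2 => y i)
        (EuclideanSpace.proj i : Euc 2 →L[ℝ] ℝ) x :=
      fun i => (EuclideanSpace.proj i : Euc 2 →L[ℝ] ℝ).hasFDerivAt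
    -- derivative of f
    have hg' : HasDerivAt g (deriv g (x 0 ^ 2 + x 1 ^ 2)) (x 0 ^ 2 + x 1 ^ 2) :=
      ((hg.differentiable (by norm_num)) _).hasDerivAt
    have hr : HasFDerivAt (fun y : Euc 2 => y 0 ^ 2 + y 1 ^ 2)
        ((x 0 • (EuclideanSpace.proj 0 : Euc 2 →L[ℝ] ℝ)
            + x 0 • (EuclideanSpace.proj 0 : Euc 2 →L[ℝ] ℝ))
          + (x 1 • (EuclideanSpace.proj 1 : Euc 2 →L[ℝ] ℝ)
            + x 1 • (EuclideanSpace.proj 1 : Euc 2 →L[ℝ] ℝ))) x := by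
      have h0 := (hcoord 0).mul (hcoord 0)
      have h1 := (hcoord 1).mul (hcoord 1)
      have := h0.add h1
      simpa [pow_two, Pi.mul_def, Pi.add_def] using this
    have hfd : HasFDerivAt f
        (deriv g (x 0 ^ 2 + x 1 ^ 2) •
          ((x 0 • (EuclideanSpace.proj 0 : Euc 2 →L[ℝ] ℝ)
              + x 0 • (EuclideanSpace.proj 0 : Euc 2 →L[ℝ] ℝ))
            + (x 1 • (EuclideanSpace.proj 1 : Euc 2 →L[ℝ] ℝ)
              + x 1 • (EuclideanSpace.proj 1 : Euc 2 →L[ℝ] ℝ)))) x := by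
      have e : f = g ∘ (fun y : Euc 2 => y 0 ^ 2 + y 1 ^ 2) := funext fun y => hf y
      rw [e]
      exact hg'.comp_hasFDerivAt x hr
    -- components A and B of C
    have hA :=
      ((((hcoord 1).mul (((hp 0).mul (hp 0)).sub ((hp 1).mul (hp 1)))).mul_const (1/2)).sub
        (((hcoord 0).mul (hp 0)).mul (hp 1))).add (((hcoord 1).mul hfd).mul hud)
    have hB :=
      ((((hcoord 0).mul (((hp 0).mul (hp 0)).sub ((hp 1).mul (hp 1)))).mul_const (1/2)).add
        (((hcoord 1).mul (hp 0)).mul (hp 1))).sub (((hcoord 0).mul hfd).mul hud)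
    have hCd := (hA.smul_const (EuclideanSpace.single (0:Fin 2) (1:ℝ))).add
      (hB.smul_const (EuclideanSpace.single (1:Fin 2) (1:ℝ)))
    have eC : C = fun y : Euc 2 =>
          (y 1 * ((gradient u y 0) * (gradient u y 0) - (gradient u y 1) * (gradient u y 1)) * (1/2)
            - y 0 * gradient u y 0 * gradient u y 1 + y 1 * f y * u y)
              • (EuclideanSpace.single 0 1 : Euc 2)
          + (y 0 * ((gradient u y 0) * (gradient u y 0) - (gradient u y 1) * (gradient u y 1)) * (1/2)
            + y 1 * gradient u y 0 * gradient u y 1 - y 0 * f y * u y)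
              • (EuclideanSpace.single 1 1 : Euc 2) := by
      funext y
      rw [hC y]
      ext j
      fin_cases j <;>
        simp [EuclideanSpace.single_apply] <;> ring
    -- Laplacian
    have egrad : (fun y => gradient u y) = fun y =>
        (gradient u y 0) • (EuclideanSpace.single 0 1 : Euc 2)
          + (gradient u y 1) • (EuclideanSpace.single 1 1 : Euc 2) := by
      funext y
      ext j
      fin_cases j <;> simp [EuclideanSpace.single_apply]
    have hgrad : HasFDerivAt (fun y => gradient u y)
        ((((ContinuousLinearMap.apply ℝ ℝ (EuclideanSpace.single 0 1)).comp D2).smulRight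
            (EuclideanSpace.single 0 1))
          + (((ContinuousLinearMap.apply ℝ ℝ (EuclideanSpace.single 1 1)).comp D2).smulRight
            (EuclideanSpace.single 1 1))) x := by
      rw [egrad]
      exact ((hp 0).smul_const _).add ((hp 1).smul_const _)
    have hlap : pdiv (fun y => gradient u y) x
        = D2 (EuclideanSpace.single 0 1) (EuclideanSpace.single 0 1)
          + D2 (EuclideanSpace.single 1 1) (EuclideanSpace.single 1 1) := by
      rw [pdiv, Fin.sum_univ_two, hgrad.fderiv]
      simp [Euc.dual_coord]
    simp only [Pi.mul_def, Pi.add_def, Pi.sub_def] at hCd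
    rw [pdiv, Fin.sum_univ_two, eC, hCd.fderiv, hlap]
    simp only [ContinuousLinearMap.add_apply, ContinuousLinearMap.smulRight_apply,
      ContinuousLinearMap.coe_sub', Pi.sub_apply, ContinuousLinearMap.smul_apply,
      ContinuousLinearMap.comp_apply, ContinuousLinearMap.apply_apply,
      PiLp.proj_apply, EuclideanSpace.single_apply, smul_eq_mul,
      PiLp.add_apply, PiLp.smul_apply]
    simp only [grad_apply]
    rw [show D2 (EuclideanSpace.single 1 1) (EuclideanSpace.single 0 1)
        = D2 (EuclideanSpace.single 0 1) (EuclideanSpace.single 1 1) from hsymm _ _]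
    norm_num
    ring
  refine ⟨hmain, fun hs x hx => ?_⟩
  rw [hmain x hx, show f x = -(pdiv (fun y => gradient u y) x) from (hs x hx).symm]
  ring
end
end

section
/- Let Ω ⊆ ℝ^d be a bounded open set equipped with a Gauss–Green partition K_1, …, K_M with boundary measures σ_j and outward unit normals n_j. Let L : ℝ^d × ℝ × ℝ^d → ℝ be twice continuously differentiable, let U : cl(Ω) → ℝ be continuous with U restricted to each K_j extending to C²(cl(K_j)), and let V : cl(Ω) → ℝ be continuous with V restricted to each K_j extending to C¹(cl(K_j)). If the function ε ↦ ∫_Ω L(x, U + εV, ∇U + ε∇V) dx is differentiable at ε = 0 with derivative 0, then the discrete Euler–Lagrange identity holds: 0 = Σ_{j} ∫_{K_j} ( −div(L_p(·,U,∇U)) + L_u(·,U,∇U) ) V dx + Σ_{j} ∫_{∂K_j} ( L_p(·,U,∇U) · n_j ) V dσ_j. -/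
open MeasureTheory RealInnerProductSpace
open scoped BigOperators

noncomputable section

/-- A Gauss–Green partition of a bounded open set `Ω ⊆ ℝ^d`: finitely many pairwise
disjoint open pieces whose closures cover `cl(Ω)`, each equipped with a finite Borel
boundary measure `σ i` supported on `∂(piece i)` and an outward unit normal field,
such that the Gauss–Green (divergence) theorem holds on each piece for `C¹` vector
fields. -/
structure GGPartition (d : ℕ) (Ω : Set (Euc d)) (N : ℕ) where
  piece : Fin N → Set (Euc d)
  isOpen_piece : ∀ i, IsOpen (piece i)
  disjoint_piece : ∀ i j, i ≠ j → Disjoint (piece i) (piece j)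
  cover : (⋃ i, closure (piece i)) = closure Ω
  σ : Fin N → Measure (Euc d)
  σ_finite : ∀ i, IsFiniteMeasure (σ i)
  σ_support : ∀ i, σ i ((frontier (piece i))ᶜ) = 0
  normal : Fin N → Euc d → Euc d
  normal_meas : ∀ i, Measurable (normal i)
  normal_bdd : ∀ i x, ‖normal i x‖ ≤ 1
  normal_unit : ∀ i, ∀ x ∈ frontier (piece i), ‖normal i x‖ = 1
  gauss_green : ∀ i (F : Euc d → Euc d), ContDiff ℝ 1 F →
    ∫ x in piece i, pdiv F x = ∫ x, ⟪F x, normal i x⟫ ∂(σ i)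

namespace DEL
variable {d : ℕ}
abbrev P (d : ℕ) := Euc d × ℝ × Euc d

def ι₃ (d : ℕ) : Euc d →L[ℝ] P d :=
  (ContinuousLinearMap.inr ℝ (Euc d) (ℝ × Euc d)).comp (ContinuousLinearMap.inr ℝ ℝ (Euc d))

lemma ι₃_apply (q : Euc d) : ι₃ d q = ((0 : Euc d), (0:ℝ), q) := rfl

lemma hasFDerivAt_comp3 {L : P d → ℝ} {x p : Euc d} {a : ℝ}
    (hL : DifferentiableAt ℝ L (x,a,p)) :
    HasFDerivAt (fun p' => L (x, a, p')) ((fderiv ℝ L (x,a,p)).comp (ι₃ d)) p := by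
  have h1 : HasFDerivAt (fun p' : Euc d => ((x, a, p') : P d)) (ι₃ d) p := by
    have h := ((ι₃ d).hasFDerivAt (x := p)).const_add ((x, a, (0:Euc d)) : P d)
    have h2 : (fun p' : Euc d => ((x,a,(0:Euc d)) : P d) + ι₃ d p')
        = fun p' => ((x,a,p') : P d) := by
      funext p'; simp [ι₃_apply, Prod.ext_iff]
    rwa [h2] at h
  exact hL.hasFDerivAt.comp p h1

lemma gradient_comp3 {L : P d → ℝ} {x p : Euc d} {a : ℝ}
    (hL : DifferentiableAt ℝ L (x,a,p)) :
    gradient (fun p' => L (x, a, p')) p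
      = (InnerProductSpace.toDual ℝ (Euc d)).symm ((fderiv ℝ L (x,a,p)).comp (ι₃ d)) := by
  unfold gradient
  rw [(hasFDerivAt_comp3 hL).fderiv]

lemma inner_gradient_comp3 {L : P d → ℝ} {x p q : Euc d} {a : ℝ}
    (hL : DifferentiableAt ℝ L (x,a,p)) :
    ⟪gradient (fun p' => L (x, a, p')) p, q⟫ = fderiv ℝ L (x,a,p) ((0:Euc d),(0:ℝ),q) := by
  rw [gradient_comp3 hL, InnerProductSpace.toDual_symm_apply]
  rfl

lemma deriv_comp2 {L : P d → ℝ} {x p : Euc d} {a : ℝ}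
    (hL : DifferentiableAt ℝ L (x,a,p)) :
    deriv (fun s => L (x, s, p)) a = fderiv ℝ L (x,a,p) ((0:Euc d),(1:ℝ),(0:Euc d)) := by
  have hc : HasDerivAt (fun s : ℝ => ((x, s, p) : P d)) ((0:Euc d),(1:ℝ),(0:Euc d)) a :=
    (hasDerivAt_const a x).prodMk ((hasDerivAt_id a).prodMk (hasDerivAt_const a p))
  exact (hL.hasFDerivAt.comp_hasDerivAt a hc).deriv

lemma contDiff_gradient {f : Euc d → ℝ} (hf : ContDiff ℝ 2 f) :
    ContDiff ℝ 1 (gradient f) := by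
  have : gradient f = fun x => (InnerProductSpace.toDual ℝ (Euc d)).symm (fderiv ℝ f x) := rfl
  rw [this]
  exact ((InnerProductSpace.toDual ℝ (Euc d)).symm.contDiff).comp
    (hf.fderiv_right (by norm_num))

lemma contDiff_G {L : P d → ℝ} (hL : ContDiff ℝ 2 L) :
    ContDiff ℝ 1 (fun z : P d =>
      (InnerProductSpace.toDual ℝ (Euc d)).symm ((fderiv ℝ L z).comp (ι₃ d))) :=
  ((InnerProductSpace.toDual ℝ (Euc d)).symm.contDiff).comp
    ((hL.fderiv_right (by norm_num)).clm_comp contDiff_const)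

lemma lagP_eq {L : Euc d → ℝ → Euc d → ℝ}
    (hL : ContDiff ℝ 2 (fun q : P d => L q.1 q.2.1 q.2.2)) {u : Euc d → ℝ} (x : Euc d) :
    lagP L u x = (InnerProductSpace.toDual ℝ (Euc d)).symm
      ((fderiv ℝ (fun q : P d => L q.1 q.2.1 q.2.2) (x, u x, gradient u x)).comp (ι₃ d)) :=
  gradient_comp3 (L := fun q : P d => L q.1 q.2.1 q.2.2)
    ((hL.differentiable (by norm_num)).differentiableAt)

lemma contDiff_lagP {L : Euc d → ℝ → Euc d → ℝ}
    (hL : ContDiff ℝ 2 (fun q : P d => L q.1 q.2.1 q.2.2)) {u : Euc d → ℝ}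
    (hu : ContDiff ℝ 2 u) : ContDiff ℝ 1 (lagP L u) := by
  have heq : lagP L u = (fun z : P d =>
      (InnerProductSpace.toDual ℝ (Euc d)).symm
        ((fderiv ℝ (fun q : P d => L q.1 q.2.1 q.2.2) z).comp (ι₃ d)))
      ∘ (fun x => (x, u x, gradient u x)) := by
    funext x; exact lagP_eq hL x
  rw [heq]
  exact (contDiff_G hL).comp
    (contDiff_id.prodMk ((hu.of_le one_le_two).prodMk (contDiff_gradient hu)))

lemma lagU_eq {L : Euc d → ℝ → Euc d → ℝ}
    (hL : ContDiff ℝ 2 (fun q : P d => L q.1 q.2.1 q.2.2)) {u : Euc d → ℝ} (x : Euc d) :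
    lagU L u x = fderiv ℝ (fun q : P d => L q.1 q.2.1 q.2.2) (x, u x, gradient u x)
      ((0:Euc d),(1:ℝ),(0:Euc d)) :=
  deriv_comp2 ((hL.differentiable (by norm_num)).differentiableAt)

lemma continuous_lagU {L : Euc d → ℝ → Euc d → ℝ}
    (hL : ContDiff ℝ 2 (fun q : P d => L q.1 q.2.1 q.2.2)) {u : Euc d → ℝ}
    (hu : ContDiff ℝ 2 u) : Continuous (lagU L u) := by
  have heq : lagU L u = fun x => fderiv ℝ (fun q : P d => L q.1 q.2.1 q.2.2)
      (x, u x, gradient u x) ((0:Euc d),(1:ℝ),(0:Euc d)) := by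
    funext x; exact lagU_eq hL x
  rw [heq]
  have hc : Continuous (fun x : Euc d => fderiv ℝ (fun q : P d => L q.1 q.2.1 q.2.2)
      (x, u x, gradient u x)) :=
    ((hL.fderiv_right (m := 1) (by norm_num)).continuous).comp
      (continuous_id.prodMk (((hu.continuous)).prodMk (contDiff_gradient hu).continuous))
  exact hc.clm_apply continuous_const

lemma inner_gradient_apply (f : Euc d → ℝ) (x y : Euc d) :
    ⟪gradient f x, y⟫ = fderiv ℝ f x y :=
  InnerProductSpace.toDual_symm_apply

lemma clm_sum_coords (ℓ : Euc d →L[ℝ] ℝ) (y : Euc d) :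
    ∑ i, ℓ (EuclideanSpace.single i 1) * y i = ℓ y := by
  have hy : ∑ i, y i • (EuclideanSpace.single i (1:ℝ) : Euc d) = y := by
    have := (EuclideanSpace.basisFun (Fin d) ℝ).sum_repr y
    simpa [EuclideanSpace.basisFun_apply, EuclideanSpace.basisFun_repr] using this
  calc ∑ i, ℓ (EuclideanSpace.single i 1) * y i
      = ∑ i, ℓ (y i • EuclideanSpace.single i 1) := by
        refine Finset.sum_congr rfl fun i _ => ?_
        rw [_root_.map_smul]; simp [mul_comm]
    _ = ℓ y := by rw [← map_sum, hy]

lemma continuous_pdiv {H : Euc d → Euc d} (hH : ContDiff ℝ 1 H) :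
    Continuous (pdiv H) := by
  have hc : Continuous (fderiv ℝ H) := hH.continuous_fderiv one_ne_zero
  unfold pdiv
  refine continuous_finset_sum _ fun i _ => ?_
  exact (EuclideanSpace.proj (𝕜 := ℝ) i).continuous.comp ((hc.clm_apply continuous_const))

lemma pdiv_smul {v : Euc d → ℝ} {H : Euc d → Euc d} {x : Euc d}
    (hv : DifferentiableAt ℝ v x) (hH : DifferentiableAt ℝ H x) :
    pdiv (fun y => v y • H y) x = fderiv ℝ v x (H x) + v x * pdiv H x := by
  unfold pdiv
  rw [fderiv_fun_smul hv hH]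
  have : ∀ i, ((v x • fderiv ℝ H x + (fderiv ℝ v x).smulRight (H x))
      (EuclideanSpace.single i 1)) i
      = v x * (fderiv ℝ H x (EuclideanSpace.single i 1)) i
        + fderiv ℝ v x (EuclideanSpace.single i 1) * (H x) i := by
    intro i
    simp [ContinuousLinearMap.add_apply, ContinuousLinearMap.smul_apply,
      ContinuousLinearMap.smulRight_apply]
  simp_rw [this]
  rw [Finset.sum_add_distrib, ← Finset.mul_sum, clm_sum_coords]
  ring

lemma hasDerivAt_param {L : P d → ℝ} (hL : Differentiable ℝ L) (x p q : Euc d)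
    (a b : ℝ) (ε : ℝ) :
    HasDerivAt (fun t : ℝ => L (x, a + t * b, p + t • q))
      (fderiv ℝ L (x, a + ε * b, p + ε • q) ((0:Euc d), b, q)) ε := by
  have hc : HasDerivAt (fun t : ℝ => ((x, a + t * b, p + t • q) : P d))
      ((0:Euc d), b, q) ε := by
    refine (hasDerivAt_const ε x).prodMk (HasDerivAt.prodMk ?_ ?_)
    · simpa using ((hasDerivAt_id ε).mul_const b).const_add a
    · simpa using ((hasDerivAt_id ε).smul_const q).const_add p
  exact (hL _).hasFDerivAt.comp_hasDerivAt ε hc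

end DEL

/-- discrete Euler–Lagrange equations: for a continuous piecewise-`C²`
function `U` and continuous piecewise-`C¹` test function `V` over a Gauss–Green
partition (triangulation) of `Ω`, criticality of the action in the direction `V`
yields the elementwise Euler–Lagrange identity with per-element boundary terms. -/
theorem discrete_euler_lagrange {d M : ℕ} (Ω : Set (Euc d))
    (hΩo : IsOpen Ω) (hΩb : Bornology.IsBounded Ω)
    (T : GGPartition d Ω M)
    (L : Euc d → ℝ → Euc d → ℝ)
    (hL : ContDiff ℝ 2 (fun q : Euc d × ℝ × Euc d => L q.1 q.2.1 q.2.2))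
    (U : Euc d → ℝ) (hU : ContinuousOn U (closure Ω))
    (Uext : Fin M → Euc d → ℝ) (hUext : ∀ j, ContDiff ℝ 2 (Uext j))
    (hUagree : ∀ j, ∀ x ∈ T.piece j, U x = Uext j x)
    (V : Euc d → ℝ) (hV : ContinuousOn V (closure Ω))
    (Vext : Fin M → Euc d → ℝ) (hVext : ∀ j, ContDiff ℝ 1 (Vext j))
    (hVagree : ∀ j, ∀ x ∈ T.piece j, V x = Vext j x)
    (hcrit : HasDerivAt
      (fun ε : ℝ => ∑ j, ∫ x in T.piece j,
        L x (Uext j x + ε * Vext j x)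
          (gradient (Uext j) x + ε • gradient (Vext j) x))
      0 0) :
    0 = (∑ j, ∫ x in T.piece j,
          (-(pdiv (lagP L (Uext j)) x) + lagU L (Uext j) x) * Vext j x)
      + ∑ j, ∫ x, ⟪lagP L (Uext j) x, T.normal j x⟫ * Vext j x ∂(T.σ j) := by
    classical
  set L' : DEL.P d → ℝ := fun q => L q.1 q.2.1 q.2.2 with hL'def
  have hKcl : IsCompact (closure Ω) :=
    Metric.isCompact_of_isClosed_isBounded isClosed_closure hΩb.closure
  have hsub : ∀ j, T.piece j ⊆ closure Ω := by
    intro j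
    refine subset_closure.trans ?_
    rw [← T.cover]
    exact Set.subset_iUnion (fun i => closure (T.piece i)) j
  have hInt : ∀ (j : Fin M) (f : Euc d → ℝ), Continuous f →
      IntegrableOn f (T.piece j) volume := fun j f hf =>
    (hf.continuousOn.integrableOn_compact hKcl).mono_set (hsub j)
  have hfr : ∀ j, frontier (T.piece j) ⊆ closure Ω := fun j =>
    (frontier_subset_closure).trans (by
      rw [← T.cover]; exact Set.subset_iUnion (fun i => closure (T.piece i)) j)
  have hσae : ∀ j, ∀ᵐ x ∂(T.σ j), x ∈ frontier (T.piece j) := by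
    intro j
    rw [MeasureTheory.ae_iff]
    exact T.σ_support j
  have hIntσ : ∀ (j : Fin M) (f : Euc d → ℝ), Continuous f →
      Integrable f (T.σ j) := by
    intro j f hf
    haveI := T.σ_finite j
    obtain ⟨C, hC⟩ := hKcl.exists_bound_of_continuousOn hf.continuousOn
    exact (integrable_const C).mono' hf.aestronglyMeasurable
      ((hσae j).mono fun x hx => hC x (hfr j hx))
  -- continuity facts per piece
  have hgu : ∀ j, Continuous (gradient (Uext j)) := fun j =>
    (DEL.contDiff_gradient (hUext j)).continuous
  have hgv : ∀ j, Continuous (gradient (Vext j)) := by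
    intro j
    have : gradient (Vext j)
        = fun x => (InnerProductSpace.toDual ℝ (Euc d)).symm (fderiv ℝ (Vext j) x) := rfl
    rw [this]
    exact ((InnerProductSpace.toDual ℝ (Euc d)).symm.continuous).comp
      ((hVext j).continuous_fderiv one_ne_zero)
  have hL'd : Differentiable ℝ L' := hL.differentiable (by norm_num)
  have hfdL : Continuous (fderiv ℝ L') :=
    (hL.fderiv_right (m := 1) (by norm_num)).continuous
  -- the per-piece derivative of the action
  set D : Fin M → ℝ := fun j => ∫ x in T.piece j,
    (Vext j x * lagU L (Uext j) x + ⟪lagP L (Uext j) x, gradient (Vext j) x⟫) with hD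
  have key : ∀ j, HasDerivAt (fun ε : ℝ => ∫ x in T.piece j,
      L x (Uext j x + ε * Vext j x)
        (gradient (Uext j) x + ε • gradient (Vext j) x)) (D j) 0 := by
    intro j
    set F' : ℝ → Euc d → ℝ := fun ε x => fderiv ℝ L'
      (x, Uext j x + ε * Vext j x, gradient (Uext j) x + ε • gradient (Vext j) x)
      ((0:Euc d), Vext j x, gradient (Vext j) x) with hF'
    have hF'cont : Continuous fun w : ℝ × Euc d => F' w.1 w.2 := by
      apply Continuous.clm_apply
      · exact hfdL.comp (((continuous_snd)).prodMk
          ((((hUext j).continuous.comp continuous_snd).add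
            (continuous_fst.mul ((hVext j).continuous.comp continuous_snd))).prodMk
          (((hgu j).comp continuous_snd).add
            (continuous_fst.smul ((hgv j).comp continuous_snd)))))
      · exact continuous_const.prodMk
          (((hVext j).continuous.comp continuous_snd).prodMk ((hgv j).comp continuous_snd))
    have hFcont : ∀ ε : ℝ, Continuous fun x => L x (Uext j x + ε * Vext j x)
        (gradient (Uext j) x + ε • gradient (Vext j) x) := by
      intro ε
      have : (fun x => L x (Uext j x + ε * Vext j x)
          (gradient (Uext j) x + ε • gradient (Vext j) x))
          = fun x => L' (x, Uext j x + ε * Vext j x,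
              gradient (Uext j) x + ε • gradient (Vext j) x) := rfl
      rw [this]
      exact hL.continuous.comp (continuous_id.prodMk
        (((hUext j).continuous.add (continuous_const.mul (hVext j).continuous)).prodMk
          ((hgu j).add (continuous_const.fun_smul (hgv j)))))
    obtain ⟨C, hC⟩ := (isCompact_Icc.prod hKcl).exists_bound_of_continuousOn
      (f := fun w : ℝ × Euc d => F' w.1 w.2) (s := Set.Icc (-1:ℝ) 1 ×ˢ closure Ω)
      hF'cont.continuousOn
    have hmain := hasDerivAt_integral_of_dominated_loc_of_deriv_le
      (μ := volume.restrict (T.piece j)) (x₀ := (0:ℝ))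
      (F := fun ε x => L x (Uext j x + ε * Vext j x)
        (gradient (Uext j) x + ε • gradient (Vext j) x))
      (F' := F') (bound := fun _ => C) (s := Metric.ball (0:ℝ) 1) (Metric.ball_mem_nhds (0:ℝ) one_pos)
      (Filter.Eventually.of_forall fun ε => (hFcont ε).aestronglyMeasurable)
      (hInt j _ (hFcont 0))
      ((hF'cont.comp (continuous_const.prodMk continuous_id)).aestronglyMeasurable)
      (by
        filter_upwards [ae_restrict_mem (T.isOpen_piece j).measurableSet] with x hx ε hε
        refine hC (ε, x) ⟨?_, hsub j hx⟩
        have : |ε| < 1 := by simpa [Real.norm_eq_abs] using Metric.mem_ball.mp hε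
        exact ⟨by linarith [neg_abs_le ε], by linarith [le_abs_self ε]⟩)
      (integrableOn_const ((measure_mono (hsub j)).trans_lt hKcl.measure_lt_top).ne)
      (Filter.Eventually.of_forall fun x ε _ =>
        DEL.hasDerivAt_param hL'd x (gradient (Uext j) x) (gradient (Vext j) x)
          (Uext j x) (Vext j x) ε)
    have h2 : (∫ x in T.piece j, F' 0 x) = D j := by
      rw [hD]
      refine integral_congr_ae (Filter.Eventually.of_forall fun x => ?_)
      have e1 : F' 0 x = fderiv ℝ L' (x, Uext j x, gradient (Uext j) x)
          ((0:Euc d), Vext j x, gradient (Vext j) x) := by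
        simp [hF']
      rw [e1]
      have e2 : ((0:Euc d), Vext j x, gradient (Vext j) x)
          = Vext j x • (((0:Euc d), (1:ℝ), (0:Euc d)) : DEL.P d)
            + (((0:Euc d), (0:ℝ), gradient (Vext j) x) : DEL.P d) := by
        simp [Prod.ext_iff]
      rw [e2, map_add, _root_.map_smul, smul_eq_mul]
      rw [← DEL.lagU_eq hL, ← DEL.inner_gradient_comp3 (L := L')
        (x := x) (a := Uext j x) (p := gradient (Uext j) x) (q := gradient (Vext j) x)
        (hL'd _)]
      rfl
    rw [← h2]
    exact hmain.2
  have hsum : HasDerivAt (fun ε : ℝ => ∑ j, ∫ x in T.piece j,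
      L x (Uext j x + ε * Vext j x)
        (gradient (Uext j) x + ε • gradient (Vext j) x)) (∑ j, D j) 0 :=
    HasDerivAt.fun_sum fun j _ => key j
  have hzero : ∑ j, D j = 0 := hsum.unique hcrit
  -- Gauss–Green rearrangement per piece
  have hGG : ∀ j, (∫ x in T.piece j,
        (-(pdiv (lagP L (Uext j)) x) + lagU L (Uext j) x) * Vext j x)
      + (∫ x, ⟪lagP L (Uext j) x, T.normal j x⟫ * Vext j x ∂(T.σ j)) = D j := by
    intro j
    set H : Euc d → Euc d := lagP L (Uext j) with hHdef
    have hH : ContDiff ℝ 1 H := DEL.contDiff_lagP hL (hUext j)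
    have hF1 : ContDiff ℝ 1 (fun x => Vext j x • H x) := (hVext j).smul hH
    have hHc : Continuous H := hH.continuous
    have step1 : (∫ x, ⟪H x, T.normal j x⟫ * Vext j x ∂(T.σ j))
        = ∫ x, ⟪Vext j x • H x, T.normal j x⟫ ∂(T.σ j) := by
      refine integral_congr_ae (Filter.Eventually.of_forall fun x => ?_)
      show ⟪H x, T.normal j x⟫ * Vext j x = ⟪Vext j x • H x, T.normal j x⟫
      rw [real_inner_smul_left]; ring
    have step2 : (∫ x, ⟪Vext j x • H x, T.normal j x⟫ ∂(T.σ j))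
        = ∫ x in T.piece j, pdiv (fun y => Vext j y • H y) x :=
      (T.gauss_green j _ hF1).symm
    have step3 : ∀ x, pdiv (fun y => Vext j y • H y) x
        = ⟪gradient (Vext j) x, H x⟫ + Vext j x * pdiv H x := by
      intro x
      rw [DEL.pdiv_smul ((hVext j).differentiable one_ne_zero x) (hH.differentiable one_ne_zero x)]
      rw [DEL.inner_gradient_apply]
    -- integrability of the pieces
    have ig1 : IntegrableOn (fun x => (-(pdiv H x) + lagU L (Uext j) x) * Vext j x)
        (T.piece j) volume :=
      hInt j _ ((((DEL.continuous_pdiv hH).neg).add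
        (DEL.continuous_lagU hL (hUext j))).mul (hVext j).continuous)
    have ig2 : IntegrableOn (fun x => ⟪gradient (Vext j) x, H x⟫ + Vext j x * pdiv H x)
        (T.piece j) volume :=
      hInt j _ (((hgv j).inner hHc).add ((hVext j).continuous.mul (DEL.continuous_pdiv hH)))
    rw [step1, step2]
    have step4 : (∫ x in T.piece j, pdiv (fun y => Vext j y • H y) x)
        = ∫ x in T.piece j, (⟪gradient (Vext j) x, H x⟫ + Vext j x * pdiv H x) :=
      integral_congr_ae (Filter.Eventually.of_forall fun x => step3 x)
    rw [step4, ← integral_add ig1 ig2, hD]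
    refine integral_congr_ae (Filter.Eventually.of_forall fun x => ?_)
    show (-(pdiv H x) + lagU L (Uext j) x) * Vext j x
        + (⟪gradient (Vext j) x, H x⟫ + Vext j x * pdiv H x)
      = Vext j x * lagU L (Uext j) x + ⟪H x, gradient (Vext j) x⟫
    rw [real_inner_comm]
    ring
  calc (0:ℝ) = ∑ j, D j := hzero.symm
    _ = ∑ j, ((∫ x in T.piece j,
          (-(pdiv (lagP L (Uext j)) x) + lagU L (Uext j) x) * Vext j x)
        + (∫ x, ⟪lagP L (Uext j) x, T.normal j x⟫ * Vext j x ∂(T.σ j))) := by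
        refine Finset.sum_congr rfl fun j _ => (hGG j).symm
    _ = (∑ j, ∫ x in T.piece j,
          (-(pdiv (lagP L (Uext j)) x) + lagU L (Uext j) x) * Vext j x)
      + ∑ j, ∫ x, ⟪lagP L (Uext j) x, T.normal j x⟫ * Vext j x ∂(T.σ j) :=
        Finset.sum_add_distrib
end
end
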